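/- For every constant C > 0, the sequence of functions (z,c,a) ↦ d^{-n}·h_{c,a,v}(P_{c,a}^n(z)) converges uniformly on the set {(z,c,a) ∈ K^d : max{|a|_v, |c|_v} ≤ C}. The limit g_{c,a,v}(z) := lim_{n→∞} d^{-n}·h_{c,a,v}(P_{c,a}^n(z)) is a continuous, non-negative function on K^d (for the topology induced by |·|_v), it satisfies the functional equation g_{c,a,v}(P_{c,a}(z)) = d·g_{c,a,v}(z), and g_{c,a,v}(z) = 0 if and only if the forward orbit (P_{c,a}^n(z))_{n≥0} is bounded, i.e. sup_n |P_{c,a}^n(z)|_v < ∞. -/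

import Mathlib

open Filter

noncomputable section

variable {K : Type*} [Field K]

/-- Elementary symmetric polynomial of degree `k` evaluated at `c = (c_1, …, c_{d-2})`. -/
def esymmK {n : ℕ} (c : Fin n → K) (k : ℕ) : K :=
  ∑ s ∈ Finset.powersetCard k (Finset.univ : Finset (Fin n)), ∏ i ∈ s, c i

/-- The polynomial `P_{c,a}` of degree `d = n + 2`:
`P_{c,a}(z) = z^d/d + ∑_{j=2}^{d-1} (-1)^{d-j} σ_{d-j}(c) z^j / j + a^d`. -/
def Pca {n : ℕ} (c : Fin n → K) (a z : K) : K :=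
  z ^ (n + 2) / ((n + 2 : ℕ) : K)
    + ∑ j ∈ Finset.Icc 2 (n + 1),
        ((-1 : K) ^ (n + 2 - j) * esymmK c (n + 2 - j) * z ^ j) / ((j : ℕ) : K)
    + a ^ (n + 2)

/-- The critical points `c_0 = 0, c_1, …, c_{d-2}` of `P_{c,a}`. -/
def crit {n : ℕ} (c : Fin n → K) (i : Fin (n + 1)) : K :=
  if h : (i : ℕ) = 0 then 0 else c ⟨(i : ℕ) - 1, by have := i.isLt; omega⟩

/-- `|c|_v = max_{1 ≤ i ≤ d-2} |c_i|_v` (with value `0` when there are no `c_i`'s). -/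
def cnorm {n : ℕ} (v : AbsoluteValue K ℝ) (c : Fin n → K) : ℝ :=
  Finset.fold max 0 (fun i => v (c i)) (Finset.univ : Finset (Fin n))

/-- `α_v = max_{1 ≤ j ≤ d} |j|_v⁻¹`. -/
def alphaV (v : AbsoluteValue K ℝ) (d : ℕ) : ℝ :=
  Finset.fold max 0 (fun j : ℕ => (v ((j : ℕ) : K))⁻¹) (Finset.Icc 1 d)

/-- `C_v(c,a) = max{ |d|_v^{1/(d-1)}, |d|_v^{1/d}·|a|_v,
max_{2≤j≤d-1} (|σ_{d-j}(c)|_v · |d/j|_v)^{1/(d-j)} }`, with `d = n + 2`. -/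
def Cv {n : ℕ} (v : AbsoluteValue K ℝ) (c : Fin n → K) (a : K) : ℝ :=
  max ((v (((n + 2 : ℕ) : K))) ^ ((1 : ℝ) / ((n : ℝ) + 1)))
    (max ((v (((n + 2 : ℕ) : K))) ^ ((1 : ℝ) / ((n : ℝ) + 2)) * v a)
      (Finset.fold max 0
        (fun j : ℕ =>
          (v (esymmK c (n + 2 - j)) * v (((n + 2 : ℕ) : K) / ((j : ℕ) : K)))
            ^ ((1 : ℝ) / ((n + 2 - j : ℕ) : ℝ)))
        (Finset.Icc 2 (n + 1))))

/-- `C̃_v(c,a) = max{ |a|_v, |c|_v, C_v(c,a) }`. -/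
def Ctilde {n : ℕ} (v : AbsoluteValue K ℝ) (c : Fin n → K) (a : K) : ℝ :=
  max (v a) (max (cnorm v c) (Cv v c a))

/-- `h_{c,a,v}(z) = log max{ C̃_v(c,a), |z|_v }`. -/
def hca {n : ℕ} (v : AbsoluteValue K ℝ) (c : Fin n → K) (a : K) (z : K) : ℝ :=
  Real.log (max (Ctilde v c a) (v z))

/-- `log⁺ = max{0, log}`. -/
def logPlus (x : ℝ) : ℝ := max 0 (Real.log x)

/-- `U_i(ε, C) = {(c,a) : max{|c|_v,|a|_v} ≥ C and |P_{c,a}(c_i)|_v ≥ ε·max{|c|_v,|a|_v}^d}`. -/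
def Uset {n : ℕ} (v : AbsoluteValue K ℝ) (i : Fin (n + 1)) (ε C : ℝ) :
    Set ((Fin n → K) × K) :=
  {p | C ≤ max (cnorm v p.1) (v p.2) ∧
       ε * max (cnorm v p.1) (v p.2) ^ (n + 2) ≤ v (Pca p.1 p.2 (crit p.1 i))}

set_option linter.unusedSectionVars false

section Ultra
variable (v : AbsoluteValue K ℝ) (hv : ∀ x y : K, v (x + y) ≤ max (v x) (v y))

include hv in
lemma ultra_nat_le (k : ℕ) : v ((k : ℕ) : K) ≤ 1 := by
  induction k with
  | zero => simp
  | succ k ih =>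
      push_cast
      exact le_trans (hv _ _) (by simp [ih])

include hv in
lemma ultra_sum_le {ι : Type*} (F : Finset ι) (f : ι → K) {B : ℝ} (hB : 0 ≤ B)
    (h : ∀ i ∈ F, v (f i) ≤ B) : v (∑ i ∈ F, f i) ≤ B := by
  classical
  induction F using Finset.induction with
  | empty => simpa using hB
  | @insert a s ha ih =>
      rw [Finset.sum_insert ha]
      exact le_trans (hv _ _) (max_le (h _ (Finset.mem_insert_self _ _))
        (ih fun i hi => h i (Finset.mem_insert_of_mem hi)))

include hv in
lemma ultra_sum_lt {ι : Type*} (F : Finset ι) (f : ι → K) {B : ℝ} (hB : 0 < B)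
    (h : ∀ i ∈ F, v (f i) < B) : v (∑ i ∈ F, f i) < B := by
  classical
  induction F using Finset.induction with
  | empty => simpa using hB
  | @insert a s ha ih =>
      rw [Finset.sum_insert ha]
      exact lt_of_le_of_lt (hv _ _) (max_lt (h _ (Finset.mem_insert_self _ _))
        (ih fun i hi => h i (Finset.mem_insert_of_mem hi)))

include hv in
lemma ultra_add_eq {x y : K} (h : v y < v x) : v (x + y) = v x := by
  refine le_antisymm (le_trans (hv _ _) (by simp [le_of_lt h])) ?_
  by_contra hlt
  push_neg at hlt
  have : v x ≤ max (v (x + y)) (v y) := by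
    have := hv (x + y) (-y)
    simpa using this
  rcases max_cases (v (x + y)) (v y) with ⟨he, _⟩ | ⟨he, _⟩ <;> rw [he] at this <;> linarith
end Ultra

-- rpow helpers
lemma pow_ge_of_rpow_le {x y : ℝ} (hx : 0 ≤ x) {k : ℕ} (hk : k ≠ 0)
    (h : x ^ ((1 : ℝ) / (k : ℝ)) ≤ y) : x ≤ y ^ k := by
  have hkR : ((k : ℝ)) ≠ 0 := Nat.cast_ne_zero.2 hk
  have key : (x ^ ((1 : ℝ) / (k : ℝ))) ^ k = x := by
    rw [← Real.rpow_natCast (x ^ ((1 : ℝ) / (k : ℝ))) k, ← Real.rpow_mul hx,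
      one_div, inv_mul_cancel₀ hkR, Real.rpow_one]
  calc x = (x ^ ((1 : ℝ) / (k : ℝ))) ^ k := key.symm
    _ ≤ y ^ k := pow_le_pow_left₀ (Real.rpow_nonneg hx _) h k

lemma pow_gt_of_rpow_lt {x y : ℝ} (hx : 0 ≤ x) {k : ℕ} (hk : k ≠ 0)
    (h : x ^ ((1 : ℝ) / (k : ℝ)) < y) : x < y ^ k := by
  have hkR : ((k : ℝ)) ≠ 0 := Nat.cast_ne_zero.2 hk
  have key : (x ^ ((1 : ℝ) / (k : ℝ))) ^ k = x := by
    rw [← Real.rpow_natCast (x ^ ((1 : ℝ) / (k : ℝ))) k, ← Real.rpow_mul hx,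
      one_div, inv_mul_cancel₀ hkR, Real.rpow_one]
  calc x = (x ^ ((1 : ℝ) / (k : ℝ))) ^ k := key.symm
    _ < y ^ k := pow_lt_pow_left₀ h (Real.rpow_nonneg hx _) hk

lemma rpow_one_div_le {x y : ℝ} (hx : 0 ≤ x) (hy : 0 ≤ y) {k : ℕ} (hk : k ≠ 0)
    (h : x ≤ y ^ k) : x ^ ((1 : ℝ) / (k : ℝ)) ≤ y := by
  have hkR : ((k : ℝ)) ≠ 0 := Nat.cast_ne_zero.2 hk
  have key : (y ^ (k : ℕ)) ^ ((1 : ℝ) / (k : ℝ)) = y := by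
    rw [← Real.rpow_natCast y k, ← Real.rpow_mul hy, mul_one_div, div_self hkR, Real.rpow_one]
  calc x ^ ((1 : ℝ) / (k : ℝ)) ≤ (y ^ k) ^ ((1 : ℝ) / (k : ℝ)) :=
        Real.rpow_le_rpow hx h (by positivity)
    _ = y := key

section Cfacts
variable [CharZero K] (v : AbsoluteValue K ℝ) {n : ℕ}

lemma vd_pos : 0 < v (((n + 2 : ℕ) : K)) :=
  v.pos (Nat.cast_ne_zero.2 (by omega))

lemma vj_pos {j : ℕ} (hj : j ≠ 0) : 0 < v ((j : ℕ) : K) :=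
  v.pos (Nat.cast_ne_zero.2 hj)

lemma tpos : 0 < (v (((n + 2 : ℕ) : K))) ^ ((1 : ℝ) / ((n : ℝ) + 1)) :=
  Real.rpow_pos_of_pos (vd_pos v) _

lemma Cv_pos (c : Fin n → K) (a : K) : 0 < Cv v c a :=
  lt_of_lt_of_le (tpos v) (le_max_left _ _)

lemma Ctilde_pos (c : Fin n → K) (a : K) : 0 < Ctilde v c a :=
  lt_of_lt_of_le (Cv_pos v c a) (le_trans (le_max_right _ _) (le_max_right _ _))

lemma Cv_le_Ctilde (c : Fin n → K) (a : K) : Cv v c a ≤ Ctilde v c a :=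
  le_trans (le_max_right _ _) (le_max_right _ _)

lemma t_le_Ctilde (c : Fin n → K) (a : K) :
    (v (((n + 2 : ℕ) : K))) ^ ((1 : ℝ) / ((n : ℝ) + 1)) ≤ Ctilde v c a :=
  le_trans (le_max_left _ _) (Cv_le_Ctilde v c a)

lemma cnorm_nonneg (c : Fin n → K) : 0 ≤ cnorm v c :=
  (Finset.le_fold_max _).2 (Or.inl le_rfl)

lemma v_le_cnorm (c : Fin n → K) (i : Fin n) : v (c i) ≤ cnorm v c :=
  (Finset.le_fold_max _).2 (Or.inr ⟨i, Finset.mem_univ i, le_rfl⟩)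

-- D^(n+1) ≥ vd
lemma Ctilde_pow_ge_vd (c : Fin n → K) (a : K) :
    v (((n + 2 : ℕ) : K)) ≤ Ctilde v c a ^ (n + 1) := by
  have := t_le_Ctilde v c a
  have h : ((1 : ℝ) / ((n : ℝ) + 1)) = (1 : ℝ) / ((n + 1 : ℕ) : ℝ) := by push_cast; ring
  rw [h] at this
  exact pow_ge_of_rpow_le (le_of_lt (vd_pos v)) (by omega) this

end Cfacts
section Core
variable [CharZero K] (v : AbsoluteValue K ℝ) {n : ℕ}

lemma rpow_pow_self {x : ℝ} (hx : 0 ≤ x) {k : ℕ} (hk : k ≠ 0) :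
    (x ^ ((1 : ℝ) / (k : ℝ))) ^ k = x := by
  rw [← Real.rpow_natCast (x ^ ((1 : ℝ) / (k : ℝ))) k, ← Real.rpow_mul hx,
    one_div, inv_mul_cancel₀ (Nat.cast_ne_zero.2 hk : ((k : ℝ)) ≠ 0), Real.rpow_one]

lemma div_shuffle (x A B C : ℝ) (hB : B ≠ 0) (hC : C ≠ 0) :
    x * A / B = x * (C / B) * (A / C) := by field_simp

lemma term_abs (c : Fin n → K) (z : K) (j : ℕ) :
    v (((-1 : K) ^ (n + 2 - j) * esymmK c (n + 2 - j) * z ^ j) / ((j : ℕ) : K))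
      = v (esymmK c (n + 2 - j)) * v z ^ j / v ((j : ℕ) : K) := by
  rw [map_div₀, map_mul, map_mul, map_pow, map_pow, AbsoluteValue.map_neg, map_one, one_pow,
    one_mul]

-- the fold component of Cv bounds each j-term datum
lemma comp3_le_Cv (c : Fin n → K) (a : K) {j : ℕ} (hj : j ∈ Finset.Icc 2 (n + 1)) :
    (v (esymmK c (n + 2 - j)) * v (((n + 2 : ℕ) : K) / ((j : ℕ) : K)))
        ^ ((1 : ℝ) / ((n + 2 - j : ℕ) : ℝ)) ≤ Cv v c a :=
  le_trans ((Finset.le_fold_max _).2 (Or.inr ⟨j, hj, le_rfl⟩))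
    (le_trans (le_max_right _ _) (le_max_right _ _))

lemma comp2_le_Cv (c : Fin n → K) (a : K) :
    (v (((n + 2 : ℕ) : K))) ^ ((1 : ℝ) / ((n : ℝ) + 2)) * v a ≤ Cv v c a :=
  le_trans (le_max_left _ _) (le_max_right _ _)

-- key quantity facts
lemma vdiv_eq (j : ℕ) (hj : j ≠ 0) :
    v (((n + 2 : ℕ) : K) / ((j : ℕ) : K)) = v (((n + 2 : ℕ) : K)) / v ((j : ℕ) : K) :=
  map_div₀ v _ _

-- term estimate, strict version (w := v z > Ctilde)
lemma term_lt (c : Fin n → K) (a : K) {z : K} (hz : Ctilde v c a < v z)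
    {j : ℕ} (hj : j ∈ Finset.Icc 2 (n + 1)) :
    v (esymmK c (n + 2 - j)) * v z ^ j / v ((j : ℕ) : K)
      < v z ^ (n + 2) / v (((n + 2 : ℕ) : K)) := by
  obtain ⟨hj2, hj1⟩ := Finset.mem_Icc.1 hj
  have hjne : j ≠ 0 := by omega
  have hkne : n + 2 - j ≠ 0 := by omega
  have hvj : 0 < v ((j : ℕ) : K) := vj_pos v hjne
  have hvd : 0 < v (((n + 2 : ℕ) : K)) := vd_pos v
  have hzpos : 0 < v z := lt_trans (Ctilde_pos v c a) hz
  have hvj' : v ((j : ℕ) : K) ≠ 0 := ne_of_gt hvj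
  have hvd' : v (((n + 2 : ℕ) : K)) ≠ 0 := ne_of_gt hvd
  have hσ : 0 ≤ v (esymmK c (n + 2 - j)) * v (((n + 2 : ℕ) : K) / ((j : ℕ) : K)) := by
    positivity
  have h1 : v (esymmK c (n + 2 - j)) * v (((n + 2 : ℕ) : K) / ((j : ℕ) : K))
      < v z ^ (n + 2 - j) :=
    pow_gt_of_rpow_lt hσ hkne (lt_of_le_of_lt (le_trans (comp3_le_Cv v c a hj)
      (Cv_le_Ctilde v c a)) hz)
  rw [vdiv_eq v j hjne] at h1
  have e1 : v (esymmK c (n + 2 - j)) * v z ^ j / v ((j : ℕ) : K)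
      = (v (esymmK c (n + 2 - j)) * (v (((n + 2 : ℕ) : K)) / v ((j : ℕ) : K)))
        * (v z ^ j / v (((n + 2 : ℕ) : K))) :=
    div_shuffle _ _ _ _ hvj' hvd'
  have e2 : v z ^ (n + 2) / v (((n + 2 : ℕ) : K))
      = v z ^ (n + 2 - j) * (v z ^ j / v (((n + 2 : ℕ) : K))) := by
    rw [← mul_div_assoc, ← pow_add]
    congr 2
    omega
  rw [e1, e2]
  exact mul_lt_mul_of_pos_right h1 (by positivity)

-- term estimate, weak version with v z ≤ D
lemma term_le (c : Fin n → K) (a : K) {z : K} (hz : v z ≤ Ctilde v c a)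
    {j : ℕ} (hj : j ∈ Finset.Icc 2 (n + 1)) :
    v (esymmK c (n + 2 - j)) * v z ^ j / v ((j : ℕ) : K)
      ≤ Ctilde v c a ^ (n + 2) / v (((n + 2 : ℕ) : K)) := by
  obtain ⟨hj2, hj1⟩ := Finset.mem_Icc.1 hj
  have hjne : j ≠ 0 := by omega
  have hkne : n + 2 - j ≠ 0 := by omega
  have hvj : 0 < v ((j : ℕ) : K) := vj_pos v hjne
  have hvd : 0 < v (((n + 2 : ℕ) : K)) := vd_pos v
  have hD : 0 < Ctilde v c a := Ctilde_pos v c a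
  have hvj' : v ((j : ℕ) : K) ≠ 0 := ne_of_gt hvj
  have hvd' : v (((n + 2 : ℕ) : K)) ≠ 0 := ne_of_gt hvd
  have hσ : 0 ≤ v (esymmK c (n + 2 - j)) * v (((n + 2 : ℕ) : K) / ((j : ℕ) : K)) := by
    positivity
  have h1 : v (esymmK c (n + 2 - j)) * v (((n + 2 : ℕ) : K) / ((j : ℕ) : K))
      ≤ Ctilde v c a ^ (n + 2 - j) :=
    pow_ge_of_rpow_le hσ hkne (le_trans (comp3_le_Cv v c a hj) (Cv_le_Ctilde v c a))
  rw [vdiv_eq v j hjne] at h1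
  have e1 : v (esymmK c (n + 2 - j)) * v z ^ j / v ((j : ℕ) : K)
      = (v (esymmK c (n + 2 - j)) * (v (((n + 2 : ℕ) : K)) / v ((j : ℕ) : K)))
        * (v z ^ j / v (((n + 2 : ℕ) : K))) :=
    div_shuffle _ _ _ _ hvj' hvd'
  have e2 : Ctilde v c a ^ (n + 2) / v (((n + 2 : ℕ) : K))
      = Ctilde v c a ^ (n + 2 - j) * (Ctilde v c a ^ j / v (((n + 2 : ℕ) : K))) := by
    rw [← mul_div_assoc, ← pow_add]
    congr 2
    omega
  rw [e1, e2]
  have hzj : v z ^ j / v (((n + 2 : ℕ) : K)) ≤ Ctilde v c a ^ j / v (((n + 2 : ℕ) : K)) := by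
    gcongr
  exact mul_le_mul h1 hzj (by positivity) (by positivity)

lemma a_term_lt (c : Fin n → K) (a : K) {z : K} (hz : Ctilde v c a < v z) :
    v (a ^ (n + 2)) < v z ^ (n + 2) / v (((n + 2 : ℕ) : K)) := by
  have hvd : 0 < v (((n + 2 : ℕ) : K)) := vd_pos v
  have h2 : (v (((n + 2 : ℕ) : K))) ^ ((1 : ℝ) / ((n : ℝ) + 2)) * v a < v z :=
    lt_of_le_of_lt (le_trans (comp2_le_Cv v c a) (Cv_le_Ctilde v c a)) hz
  have hcast : ((1 : ℝ) / ((n : ℝ) + 2)) = (1 : ℝ) / ((n + 2 : ℕ) : ℝ) := by push_cast; ring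
  have key : ((v (((n + 2 : ℕ) : K))) ^ ((1 : ℝ) / ((n : ℝ) + 2))) ^ (n + 2)
      = v (((n + 2 : ℕ) : K)) := by
    rw [hcast]; exact rpow_pow_self hvd.le (by omega)
  have h3 : ((v (((n + 2 : ℕ) : K))) ^ ((1 : ℝ) / ((n : ℝ) + 2)) * v a) ^ (n + 2)
      < v z ^ (n + 2) :=
    pow_lt_pow_left₀ h2 (by positivity) (by omega)
  rw [mul_pow, key] at h3
  rw [map_pow, lt_div_iff₀ hvd, mul_comm]
  exact h3

lemma a_term_le (c : Fin n → K) (a : K) :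
    v (a ^ (n + 2)) ≤ Ctilde v c a ^ (n + 2) / v (((n + 2 : ℕ) : K)) := by
  have hvd : 0 < v (((n + 2 : ℕ) : K)) := vd_pos v
  have h2 : (v (((n + 2 : ℕ) : K))) ^ ((1 : ℝ) / ((n : ℝ) + 2)) * v a ≤ Ctilde v c a :=
    le_trans (comp2_le_Cv v c a) (Cv_le_Ctilde v c a)
  have hcast : ((1 : ℝ) / ((n : ℝ) + 2)) = (1 : ℝ) / ((n + 2 : ℕ) : ℝ) := by push_cast; ring
  have key : ((v (((n + 2 : ℕ) : K))) ^ ((1 : ℝ) / ((n : ℝ) + 2))) ^ (n + 2)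
      = v (((n + 2 : ℕ) : K)) := by
    rw [hcast]; exact rpow_pow_self hvd.le (by omega)
  have h3 : ((v (((n + 2 : ℕ) : K))) ^ ((1 : ℝ) / ((n : ℝ) + 2)) * v a) ^ (n + 2)
      ≤ Ctilde v c a ^ (n + 2) :=
    pow_le_pow_left₀ (by positivity) h2 _
  rw [mul_pow, key] at h3
  rw [map_pow, le_div_iff₀ hvd, mul_comm]
  exact h3

variable (hv : ∀ x y : K, v (x + y) ≤ max (v x) (v y))

include hv in
lemma Pca_abs_big (c : Fin n → K) (a : K) {z : K} (hz : Ctilde v c a < v z) :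
    v (Pca c a z) = v z ^ (n + 2) / v (((n + 2 : ℕ) : K)) := by
  have hvd : 0 < v (((n + 2 : ℕ) : K)) := vd_pos v
  have hzpos : 0 < v z := lt_trans (Ctilde_pos v c a) hz
  have hA : v (z ^ (n + 2) / ((n + 2 : ℕ) : K)) = v z ^ (n + 2) / v (((n + 2 : ℕ) : K)) := by
    rw [map_div₀, map_pow]
  have hS : v (∑ j ∈ Finset.Icc 2 (n + 1),
      ((-1 : K) ^ (n + 2 - j) * esymmK c (n + 2 - j) * z ^ j) / ((j : ℕ) : K))
      < v z ^ (n + 2) / v (((n + 2 : ℕ) : K)) := by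
    apply ultra_sum_lt v hv _ _ (by positivity)
    intro j hj
    rw [term_abs]
    exact term_lt v c a hz hj
  have hB : v (a ^ (n + 2)) < v z ^ (n + 2) / v (((n + 2 : ℕ) : K)) := a_term_lt v c a hz
  have hSB : v ((∑ j ∈ Finset.Icc 2 (n + 1),
      ((-1 : K) ^ (n + 2 - j) * esymmK c (n + 2 - j) * z ^ j) / ((j : ℕ) : K)) + a ^ (n + 2))
      < v z ^ (n + 2) / v (((n + 2 : ℕ) : K)) :=
    lt_of_le_of_lt (hv _ _) (max_lt hS hB)
  rw [Pca, add_assoc]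
  rw [ultra_add_eq v hv (by rw [hA]; exact hSB), hA]

include hv in
lemma Pca_abs_small (c : Fin n → K) (a : K) {z : K} (hz : v z ≤ Ctilde v c a) :
    v (Pca c a z) ≤ Ctilde v c a ^ (n + 2) / v (((n + 2 : ℕ) : K)) := by
  have hvd : 0 < v (((n + 2 : ℕ) : K)) := vd_pos v
  have hD : 0 < Ctilde v c a := Ctilde_pos v c a
  have hA : v (z ^ (n + 2) / ((n + 2 : ℕ) : K)) ≤ Ctilde v c a ^ (n + 2)
      / v (((n + 2 : ℕ) : K)) := by
    rw [map_div₀, map_pow]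
    gcongr
  have hS : v (∑ j ∈ Finset.Icc 2 (n + 1),
      ((-1 : K) ^ (n + 2 - j) * esymmK c (n + 2 - j) * z ^ j) / ((j : ℕ) : K))
      ≤ Ctilde v c a ^ (n + 2) / v (((n + 2 : ℕ) : K)) := by
    apply ultra_sum_le v hv _ _ (by positivity)
    intro j hj
    rw [term_abs]
    exact term_le v c a hz hj
  have hB : v (a ^ (n + 2)) ≤ Ctilde v c a ^ (n + 2) / v (((n + 2 : ℕ) : K)) :=
    a_term_le v c a
  rw [Pca]
  exact le_trans (hv _ _) (max_le (le_trans (hv _ _) (max_le hA hS)) hB)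

end Core

section Step
variable [CharZero K] (v : AbsoluteValue K ℝ) {n : ℕ}
  (hv : ∀ x y : K, v (x + y) ≤ max (v x) (v y))

include hv in
lemma vd_le_one : v (((n + 2 : ℕ) : K)) ≤ 1 := ultra_nat_le v hv _

include hv in
lemma escape (c : Fin n → K) (a : K) {z : K} (hz : Ctilde v c a < v z) :
    v z < v (Pca c a z) := by
  have hvd : 0 < v (((n + 2 : ℕ) : K)) := vd_pos v
  have hzpos : 0 < v z := lt_trans (Ctilde_pos v c a) hz
  rw [Pca_abs_big v hv c a hz, lt_div_iff₀ hvd]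
  have h1 : v (((n + 2 : ℕ) : K)) < v z ^ (n + 1) := by
    have ht := t_le_Ctilde v c a
    have h : ((1 : ℝ) / ((n : ℝ) + 1)) = (1 : ℝ) / ((n + 1 : ℕ) : ℝ) := by push_cast; ring
    rw [h] at ht
    exact pow_gt_of_rpow_lt hvd.le (by omega) (lt_of_le_of_lt ht hz)
  calc v z * v (((n + 2 : ℕ) : K)) < v z * v z ^ (n + 1) :=
        mul_lt_mul_of_pos_left h1 hzpos
    _ = v z ^ (n + 2) := by rw [← pow_succ']
include hv in
lemma hca_step (c : Fin n → K) (a : K) (z : K) :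
    |hca v c a (Pca c a z) - ((n : ℝ) + 2) * hca v c a z|
      ≤ ((n : ℝ) + 1) * |Real.log (Ctilde v c a)| + Real.log (v (((n + 2 : ℕ) : K)))⁻¹ := by
  have hvd : 0 < v (((n + 2 : ℕ) : K)) := vd_pos v
  have hD : 0 < Ctilde v c a := Ctilde_pos v c a
  set L := Real.log (Ctilde v c a) with hLdef
  set M := Real.log (v (((n + 2 : ℕ) : K))) with hMdef
  have hM : M ≤ 0 := Real.log_nonpos hvd.le (vd_le_one v hv)
  have hlinv : Real.log (v (((n + 2 : ℕ) : K)))⁻¹ = -M := Real.log_inv _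
  have h1 : ((n : ℝ) + 1) * L ≤ ((n : ℝ) + 1) * |L| :=
    mul_le_mul_of_nonneg_left (le_abs_self L) (by positivity)
  have h2 : ((n : ℝ) + 1) * (-|L|) ≤ ((n : ℝ) + 1) * L :=
    mul_le_mul_of_nonneg_left (neg_abs_le L) (by positivity)
  have habs : 0 ≤ ((n : ℝ) + 1) * |L| := by positivity
  rw [hlinv]
  rcases lt_or_ge (Ctilde v c a) (v z) with hbig | hsmall
  · have hzpos : 0 < v z := lt_trans hD hbig
    have hP : v (Pca c a z) = v z ^ (n + 2) / v (((n + 2 : ℕ) : K)) :=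
      Pca_abs_big v hv c a hbig
    have hPD : Ctilde v c a < v (Pca c a z) := lt_trans hbig (escape v hv c a hbig)
    have e1 : hca v c a z = Real.log (v z) := by
      rw [hca, max_eq_right hbig.le]
    have e2 : hca v c a (Pca c a z) = ((n : ℝ) + 2) * Real.log (v z) - M := by
      rw [hca, max_eq_right hPD.le, hP, Real.log_div (by positivity) hvd.ne',
        Real.log_pow]
      congr 1
      push_cast
      ring
    rw [e1, e2]
    have : ((n : ℝ) + 2) * Real.log (v z) - M - ((n : ℝ) + 2) * Real.log (v z) = -M := by ring
    rw [this, abs_of_nonneg (by linarith)]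
    linarith
  · have e1 : hca v c a z = L := by rw [hca, max_eq_left hsmall]
    have hX1 : L ≤ hca v c a (Pca c a z) := by
      rw [hca]
      exact Real.log_le_log hD (le_max_left _ _)
    have hX2 : hca v c a (Pca c a z) ≤ max L (((n : ℝ) + 2) * L - M) := by
      rw [hca]
      have hP : v (Pca c a z) ≤ Ctilde v c a ^ (n + 2) / v (((n + 2 : ℕ) : K)) :=
        Pca_abs_small v hv c a hsmall
      have e3 : Real.log (Ctilde v c a ^ (n + 2) / v (((n + 2 : ℕ) : K)))
          = ((n : ℝ) + 2) * L - M := by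
        rw [Real.log_div (by positivity) hvd.ne', Real.log_pow]
        congr 1
        push_cast
        ring
      rcases max_cases (Ctilde v c a) (v (Pca c a z)) with ⟨he, _⟩ | ⟨he, hle⟩
      · rw [he]; exact le_max_left _ _
      · rw [he]
        refine le_trans (le_trans (Real.log_le_log (lt_trans hD hle) hP) e3.le)
          (le_max_right _ _)
    rw [e1, abs_le]
    rcases max_cases L (((n : ℝ) + 2) * L - M) with ⟨he, _⟩ | ⟨he, _⟩ <;>
      rw [he] at hX2 <;> constructor <;> linarith

end Step

section Bounds
variable [CharZero K] (v : AbsoluteValue K ℝ) {n : ℕ}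
  (hv : ∀ x y : K, v (x + y) ≤ max (v x) (v y))

lemma alphaV_nonneg (d : ℕ) : 0 ≤ alphaV v d := (Finset.le_fold_max _).2 (Or.inl le_rfl)

include hv in
lemma esymm_abs_le (c : Fin n → K) (k : ℕ) : v (esymmK c k) ≤ cnorm v c ^ k := by
  apply ultra_sum_le v hv _ _ (pow_nonneg (cnorm_nonneg v c) k)
  intro s hs
  have hcard : s.card = k := (Finset.mem_powersetCard.1 hs).2
  rw [map_prod]
  calc ∏ i ∈ s, v (c i) ≤ ∏ _i ∈ s, cnorm v c :=
        Finset.prod_le_prod (fun i _ => v.nonneg _) (fun i _ => v_le_cnorm v c i)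
    _ = cnorm v c ^ k := by rw [Finset.prod_const, hcard]

include hv in
lemma Ctilde_le_bound (c : Fin n → K) (a : K) {C : ℝ} (hC : 0 < C)
    (h : max (v a) (cnorm v c) ≤ C) :
    Ctilde v c a ≤ max 1 (C * max 1 (alphaV v (n + 2))) := by
  set β : ℝ := max 1 (alphaV v (n + 2)) with hβdef
  have hβ1 : (1 : ℝ) ≤ β := le_max_left _ _
  have hβ0 : (0 : ℝ) ≤ β := le_trans zero_le_one hβ1
  set M : ℝ := max 1 (C * β) with hMdef
  have hCM : C ≤ M := le_trans (by nlinarith) (le_max_right _ _)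
  have hvd : 0 < v (((n + 2 : ℕ) : K)) := vd_pos v
  have hvd1 : v (((n + 2 : ℕ) : K)) ≤ 1 := vd_le_one v hv
  have hva : v a ≤ C := le_trans (le_max_left _ _) h
  have hcn : cnorm v c ≤ C := le_trans (le_max_right _ _) h
  rw [Ctilde]
  refine max_le (hva.trans hCM) (max_le (hcn.trans hCM) ?_)
  rw [Cv]
  refine max_le ?_ (max_le ?_ ?_)
  · exact le_trans (Real.rpow_le_one hvd.le hvd1 (by positivity)) (le_max_left _ _)
  · refine le_trans ?_ hCM
    calc (v (((n + 2 : ℕ) : K))) ^ ((1 : ℝ) / ((n : ℝ) + 2)) * v a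
        ≤ 1 * C := mul_le_mul (Real.rpow_le_one hvd.le hvd1 (by positivity)) hva
          (v.nonneg a) zero_le_one
      _ = C := one_mul C
  · rw [Finset.fold_max_le]
    refine ⟨le_trans zero_le_one (le_max_left _ _), ?_⟩
    intro j hj
    obtain ⟨hj2, hj1⟩ := Finset.mem_Icc.1 hj
    have hkne : n + 2 - j ≠ 0 := by omega
    have hvj : 0 < v ((j : ℕ) : K) := vj_pos v (by omega)
    have hα : (v ((j : ℕ) : K))⁻¹ ≤ alphaV v (n + 2) :=
      (Finset.le_fold_max _).2 (Or.inr ⟨j, Finset.mem_Icc.2 ⟨by omega, by omega⟩, le_rfl⟩)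
    have hdiv : v (((n + 2 : ℕ) : K) / ((j : ℕ) : K)) ≤ β := by
      rw [vdiv_eq v j (by omega), div_eq_mul_inv]
      calc v (((n + 2 : ℕ) : K)) * (v ((j : ℕ) : K))⁻¹ ≤ 1 * (v ((j : ℕ) : K))⁻¹ :=
            mul_le_mul_of_nonneg_right hvd1 (by positivity)
        _ = (v ((j : ℕ) : K))⁻¹ := one_mul _
        _ ≤ β := le_trans hα (le_max_right _ _)
    have hbase : v (esymmK c (n + 2 - j)) * v (((n + 2 : ℕ) : K) / ((j : ℕ) : K))
        ≤ (C * β) ^ (n + 2 - j) := by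
      calc v (esymmK c (n + 2 - j)) * v (((n + 2 : ℕ) : K) / ((j : ℕ) : K))
          ≤ C ^ (n + 2 - j) * β :=
            mul_le_mul (le_trans (esymm_abs_le v hv c _)
              (pow_le_pow_left₀ (cnorm_nonneg v c) hcn _)) hdiv (v.nonneg _) (by positivity)
        _ ≤ C ^ (n + 2 - j) * β ^ (n + 2 - j) :=
            mul_le_mul_of_nonneg_left (le_self_pow₀ hβ1 hkne) (by positivity)
        _ = (C * β) ^ (n + 2 - j) := (mul_pow _ _ _).symm
    refine le_trans (rpow_one_div_le (by positivity) (by positivity) hkne hbase) ?_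
    exact le_max_right _ _

include hv in
lemma A_bound (C : ℝ) (hC : 0 < C) :
    ∃ A : ℝ, ∀ (c : Fin n → K) (a : K), max (v a) (cnorm v c) ≤ C →
      ((n : ℝ) + 1) * |Real.log (Ctilde v c a)| + Real.log (v (((n + 2 : ℕ) : K)))⁻¹ ≤ A := by
  set t : ℝ := (v (((n + 2 : ℕ) : K))) ^ ((1 : ℝ) / ((n : ℝ) + 1)) with htdef
  set M : ℝ := max 1 (C * max 1 (alphaV v (n + 2))) with hMdef
  refine ⟨((n : ℝ) + 1) * max |Real.log t| |Real.log M|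
    + Real.log (v (((n + 2 : ℕ) : K)))⁻¹, ?_⟩
  intro c a h
  have h1 : t ≤ Ctilde v c a := t_le_Ctilde v c a
  have h2 : Ctilde v c a ≤ M := Ctilde_le_bound v hv c a hC h
  have h3 : |Real.log (Ctilde v c a)| ≤ max |Real.log t| |Real.log M| := by
    have ht : 0 < t := tpos v
    have hD : 0 < Ctilde v c a := Ctilde_pos v c a
    have l1 : Real.log t ≤ Real.log (Ctilde v c a) := Real.log_le_log ht h1
    have l2 : Real.log (Ctilde v c a) ≤ Real.log M := Real.log_le_log hD h2
    rcases abs_cases (Real.log (Ctilde v c a)) with ⟨he, _⟩ | ⟨he, _⟩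
    · rw [he]; exact le_trans (le_trans l2 (le_abs_self _)) (le_max_right _ _)
    · rw [he]
      exact le_trans (le_trans (neg_le_neg l1) (neg_le_abs _)) (le_max_left _ _)
  exact add_le_add_left (mul_le_mul_of_nonneg_left h3 (by positivity)) _

include hv in
lemma iter_formula (c : Fin n → K) (a : K) {w : K} (hw : Ctilde v c a < v w) (k : ℕ) :
    v ((Pca c a)^[k] w)
        = (v (((n + 2 : ℕ) : K))) ^ ((1 : ℝ) / ((n : ℝ) + 1))
          * (v w / (v (((n + 2 : ℕ) : K))) ^ ((1 : ℝ) / ((n : ℝ) + 1))) ^ ((n + 2) ^ k)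
      ∧ Ctilde v c a < v ((Pca c a)^[k] w) := by
  set t : ℝ := (v (((n + 2 : ℕ) : K))) ^ ((1 : ℝ) / ((n : ℝ) + 1)) with htdef
  have ht : 0 < t := tpos v
  have hvd : 0 < v (((n + 2 : ℕ) : K)) := vd_pos v
  have htpow : t ^ (n + 1) = v (((n + 2 : ℕ) : K)) := by
    rw [htdef, show ((1 : ℝ) / ((n : ℝ) + 1)) = (1 : ℝ) / ((n + 1 : ℕ) : ℝ) by push_cast; ring]
    exact rpow_pow_self hvd.le (by omega)
  set s : ℝ := v w / t with hsdef
  have hs : 1 < s := (one_lt_div ht).2 (lt_of_le_of_lt (t_le_Ctilde v c a) hw)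
  have hs0 : 0 < s := lt_trans zero_lt_one hs
  induction k with
  | zero =>
      refine ⟨?_, by simpa using hw⟩
      simp only [Function.iterate_zero_apply, pow_zero, pow_one]
      rw [hsdef, mul_div_cancel₀ _ (ne_of_gt ht)]
  | succ k ih =>
      obtain ⟨hval, hbig⟩ := ih
      have hstep : v ((Pca c a)^[k + 1] w) = v ((Pca c a)^[k] w) ^ (n + 2)
          / v (((n + 2 : ℕ) : K)) := by
        rw [Function.iterate_succ_apply']
        exact Pca_abs_big v hv c a hbig
      have hval' : v ((Pca c a)^[k + 1] w) = t * s ^ ((n + 2) ^ (k + 1)) := by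
        rw [hstep, hval, ← htpow, mul_pow, ← pow_mul, ← pow_succ (n + 2) k]
        rw [pow_succ t (n + 1)]
        field_simp
      refine ⟨hval', ?_⟩
      rw [hval']
      have hpow : s ≤ s ^ ((n + 2) ^ (k + 1)) :=
        le_self_pow₀ hs.le (by positivity)
      calc Ctilde v c a < v w := hw
        _ = t * s := by rw [hsdef, mul_div_cancel₀ _ (ne_of_gt ht)]
        _ ≤ t * s ^ ((n + 2) ^ (k + 1)) := mul_le_mul_of_nonneg_left hpow ht.le
end Bounds

section Cont
variable {L : Type*} [NormedField L] (v : AbsoluteValue L ℝ) (hnorm : ∀ x : L, v x = ‖x‖)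

include hnorm in
lemma cont_v : Continuous fun x : L => v x := by
  have : (fun x : L => v x) = fun x : L => ‖x‖ := funext hnorm
  rw [this]
  exact continuous_norm

lemma cont_esymm {n : ℕ} (k : ℕ) : Continuous fun c : Fin n → L => esymmK c k := by
  unfold esymmK
  exact continuous_finset_sum _ fun s _ =>
    continuous_finset_prod _ fun i _ => continuous_apply i

lemma cont_pca {n : ℕ} {X : Type*} [TopologicalSpace X] {fc : X → Fin n → L} {fa fz : X → L}
    (hc : Continuous fc) (ha : Continuous fa) (hz : Continuous fz) :
    Continuous fun x => Pca (fc x) (fa x) (fz x) := by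
  unfold Pca
  refine Continuous.add (Continuous.add ?_ ?_) ?_
  · exact (hz.pow _).div_const _
  · refine continuous_finset_sum _ fun j _ => ?_
    exact ((continuous_const.mul ((cont_esymm _).comp hc)).mul (hz.pow _)).div_const _
  · exact ha.pow _

lemma cont_fold_max {X ι : Type*} [TopologicalSpace X] (F : Finset ι) (f : ι → X → ℝ) (b : ℝ)
    (hf : ∀ i ∈ F, Continuous (f i)) :
    Continuous fun x => F.fold max b fun i => f i x := by
  classical
  induction F using Finset.induction with
  | empty => simpa using continuous_const
  | @insert a s ha ih =>
      simp only [Finset.fold_insert ha]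
      exact (hf _ (Finset.mem_insert_self _ _)).max
        (ih fun i hi => hf i (Finset.mem_insert_of_mem hi))

include hnorm in
lemma cont_cnorm {n : ℕ} : Continuous fun c : Fin n → L => cnorm v c := by
  unfold cnorm
  exact cont_fold_max _ _ _ fun i _ => (cont_v v hnorm).comp (continuous_apply i)

lemma cont_rpow_const {e : ℝ} (he : 0 < e) : Continuous fun x : ℝ => x ^ e :=
  continuous_iff_continuousAt.2 fun x => Real.continuousAt_rpow_const x e (Or.inr he.le)

include hnorm in
lemma cont_Cv {n : ℕ} : Continuous fun p : (Fin n → L) × L => Cv v p.1 p.2 := by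
  unfold Cv
  refine Continuous.max continuous_const (Continuous.max ?_ ?_)
  · exact continuous_const.mul ((cont_v v hnorm).comp continuous_snd)
  · refine cont_fold_max _ _ _ fun j hj => ?_
    obtain ⟨hj2, hj1⟩ := Finset.mem_Icc.1 hj
    have hkne : ((n + 2 - j : ℕ) : ℝ) ≠ 0 := Nat.cast_ne_zero.2 (by omega)
    refine (cont_rpow_const ?_).comp ?_
    · positivity
    · exact (((cont_v v hnorm).comp ((cont_esymm _).comp continuous_fst)).mul continuous_const)

include hnorm in
lemma cont_Ctilde {n : ℕ} : Continuous fun p : (Fin n → L) × L => Ctilde v p.1 p.2 := by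
  unfold Ctilde
  exact Continuous.max ((cont_v v hnorm).comp continuous_snd)
    (Continuous.max ((cont_cnorm v hnorm).comp continuous_fst) (cont_Cv v hnorm))

end Cont

/-- the functions `(z,c,a) ↦ d^{-m}·h_{c,a,v}(P_{c,a}^m(z))` converge, uniformly
on each set `{(z,c,a) : max{|a|_v,|c|_v} ≤ C}`, to a limit `g_{c,a,v}(z)` which is a continuous
non-negative function on `K^d`, satisfies `g_{c,a,v}(P_{c,a}(z)) = d·g_{c,a,v}(z)`, and vanishes
exactly at the points with bounded forward orbit. Here `d = n + 2`. -/
theorem statement4 {K : Type*} [Field K] [IsAlgClosed K] [CharZero K]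
    (v : AbsoluteValue K ℝ) (hv : ∀ x y : K, v (x + y) ≤ max (v x) (v y)) (n : ℕ) :
    ∃ g : (Fin n → K) → K → K → ℝ,
      -- `g` is the pointwise limit `g_{c,a,v}(z) = lim_m d^{-m} h_{c,a,v}(P_{c,a}^m(z))`
      (∀ (c : Fin n → K) (a z : K),
        Tendsto (fun m : ℕ => hca v c a ((Pca c a)^[m] z) / ((n : ℝ) + 2) ^ m)
          atTop (nhds (g c a z))) ∧
      -- uniform convergence on `{(z,c,a) : max{|a|_v, |c|_v} ≤ C}` for every `C > 0`
      (∀ C : ℝ, 0 < C →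
        TendstoUniformlyOn
          (fun (m : ℕ) (p : K × (Fin n → K) × K) =>
            hca v p.2.1 p.2.2 ((Pca p.2.1 p.2.2)^[m] p.1) / ((n : ℝ) + 2) ^ m)
          (fun p => g p.2.1 p.2.2 p.1) atTop
          {p : K × (Fin n → K) × K | max (v p.2.2) (cnorm v p.2.1) ≤ C}) ∧
      -- `g` is non-negative
      (∀ (c : Fin n → K) (a z : K), 0 ≤ g c a z) ∧
      -- `g` is continuous on `K^d` for the topology induced by `|·|_v`
      (∀ (c : Fin n → K) (a z : K) (ε : ℝ), 0 < ε → ∃ δ : ℝ, 0 < δ ∧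
        ∀ (c' : Fin n → K) (a' z' : K),
          (∀ i, v (c' i - c i) < δ) → v (a' - a) < δ → v (z' - z) < δ →
            |g c' a' z' - g c a z| < ε) ∧
      -- the functional equation `g_{c,a,v} ∘ P_{c,a} = d · g_{c,a,v}`
      (∀ (c : Fin n → K) (a z : K), g c a (Pca c a z) = ((n : ℝ) + 2) * g c a z) ∧
      -- `g = 0` exactly on points with bounded forward orbit
      (∀ (c : Fin n → K) (a z : K),
        g c a z = 0 ↔ ∃ B : ℝ, ∀ m : ℕ, v ((Pca c a)^[m] z) ≤ B) := by
  classical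
  have hd0 : (0 : ℝ) < (n : ℝ) + 2 := by positivity
  have hd1 : (1 : ℝ) < (n : ℝ) + 2 := by
    have := Nat.cast_nonneg (α := ℝ) n
    linarith
  set r : ℝ := 1 / ((n : ℝ) + 2) with hrdef
  have hr0 : 0 < r := by positivity
  have hr1 : r < 1 := by
    rw [hrdef, div_lt_one hd0]
    linarith
  set A : (Fin n → K) → K → ℝ := fun c a =>
    ((n : ℝ) + 1) * |Real.log (Ctilde v c a)| + Real.log (v (((n + 2 : ℕ) : K)))⁻¹ with hAdef
  set u : (Fin n → K) → K → K → ℕ → ℝ :=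
    fun c a z m => hca v c a ((Pca c a)^[m] z) / ((n : ℝ) + 2) ^ m with hudef
  have hdist : ∀ c a z m, dist (u c a z m) (u c a z (m + 1)) ≤ (A c a / ((n : ℝ) + 2)) * r ^ m := by
    intro c a z m
    have key := hca_step v hv c a ((Pca c a)^[m] z)
    have e : u c a z m - u c a z (m + 1)
        = (((n : ℝ) + 2) * hca v c a ((Pca c a)^[m] z)
            - hca v c a (Pca c a ((Pca c a)^[m] z))) / ((n : ℝ) + 2) ^ (m + 1) := by
      show hca v c a ((Pca c a)^[m] z) / ((n : ℝ) + 2) ^ m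
          - hca v c a ((Pca c a)^[m + 1] z) / ((n : ℝ) + 2) ^ (m + 1) = _
      rw [Function.iterate_succ_apply', pow_succ]
      field_simp
    rw [Real.dist_eq, e, abs_div, abs_of_pos (pow_pos hd0 _), abs_sub_comm]
    have e2 : (A c a / ((n : ℝ) + 2)) * r ^ m = A c a / ((n : ℝ) + 2) ^ (m + 1) := by
      rw [hrdef, div_pow, one_pow, div_mul_div_comm, mul_one, ← pow_succ']
    rw [e2]
    gcongr
  have hcauchy : ∀ c a z, CauchySeq (u c a z) := fun c a z =>
    cauchySeq_of_le_geometric r _ hr1 (hdist c a z)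
  set g : (Fin n → K) → K → K → ℝ := fun c a z => limUnder atTop (u c a z) with hgdef
  have hg : ∀ c a z, Tendsto (u c a z) atTop (nhds (g c a z)) := fun c a z =>
    (hcauchy c a z).tendsto_limUnder
  have hrate : ∀ c a z m,
      dist (u c a z m) (g c a z) ≤ (A c a / ((n : ℝ) + 2)) * r ^ m / (1 - r) := fun c a z m =>
    dist_le_of_le_geometric_of_tendsto r _ hr1 (hdist c a z) (hg c a z) m
  have hunif : ∀ C : ℝ, 0 < C → TendstoUniformlyOn
      (fun (m : ℕ) (p : K × (Fin n → K) × K) =>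
        hca v p.2.1 p.2.2 ((Pca p.2.1 p.2.2)^[m] p.1) / ((n : ℝ) + 2) ^ m)
      (fun p => g p.2.1 p.2.2 p.1) atTop
      {p : K × (Fin n → K) × K | max (v p.2.2) (cnorm v p.2.1) ≤ C} := by
    intro C hC
    obtain ⟨A0, hA0⟩ := A_bound v hv C hC
    rw [Metric.tendstoUniformlyOn_iff]
    intro ε hε
    have h1r : (0 : ℝ) < 1 - r := by linarith
    have htends : Tendsto (fun m : ℕ => A0 / ((n : ℝ) + 2) / (1 - r) * r ^ m) atTop (nhds 0) := by
      have h := (tendsto_pow_atTop_nhds_zero_of_lt_one hr0.le hr1).const_mul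
        (A0 / ((n : ℝ) + 2) / (1 - r))
      simpa using h
    filter_upwards [htends.eventually (gt_mem_nhds hε)] with m hm p hp
    have hA' : A p.2.1 p.2.2 ≤ A0 := hA0 p.2.1 p.2.2 hp
    have h1 : dist (g p.2.1 p.2.2 p.1) (u p.2.1 p.2.2 p.1 m)
        ≤ A p.2.1 p.2.2 / ((n : ℝ) + 2) * r ^ m / (1 - r) := by
      rw [dist_comm]
      exact hrate _ _ _ m
    have h2 : A p.2.1 p.2.2 / ((n : ℝ) + 2) * r ^ m / (1 - r)
        ≤ A0 / ((n : ℝ) + 2) / (1 - r) * r ^ m := by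
      have e3 : ∀ B : ℝ, B / ((n : ℝ) + 2) * r ^ m / (1 - r)
          = B * (r ^ m / (((n : ℝ) + 2) * (1 - r))) := by
        intro B
        field_simp
      have e4 : A0 / ((n : ℝ) + 2) / (1 - r) * r ^ m
          = A0 * (r ^ m / (((n : ℝ) + 2) * (1 - r))) := by
        field_simp
      rw [e3, e4]
      exact mul_le_mul_of_nonneg_right hA' (by positivity)
    exact lt_of_le_of_lt (le_trans h1 h2) hm
  have hnonneg : ∀ (c : Fin n → K) (a z : K), 0 ≤ g c a z := by
    intro c a z
    have hD : 0 < Ctilde v c a := Ctilde_pos v c a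
    have hlow : ∀ m, Real.log (Ctilde v c a) * r ^ m ≤ u c a z m := by
      intro m
      have h1 : Real.log (Ctilde v c a) ≤ hca v c a ((Pca c a)^[m] z) :=
        Real.log_le_log hD (le_max_left _ _)
      have e : Real.log (Ctilde v c a) * r ^ m
          = Real.log (Ctilde v c a) / ((n : ℝ) + 2) ^ m := by
        rw [hrdef, div_pow, one_pow, mul_one_div]
      rw [e]
      show _ ≤ hca v c a ((Pca c a)^[m] z) / ((n : ℝ) + 2) ^ m
      gcongr
    have h0 : Tendsto (fun m : ℕ => Real.log (Ctilde v c a) * r ^ m) atTop (nhds 0) := by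
      have h := (tendsto_pow_atTop_nhds_zero_of_lt_one hr0.le hr1).const_mul
        (Real.log (Ctilde v c a))
      simpa using h
    exact le_of_tendsto_of_tendsto' h0 (hg c a z) hlow
  have hfun : ∀ (c : Fin n → K) (a z : K), g c a (Pca c a z) = ((n : ℝ) + 2) * g c a z := by
    intro c a z
    have h1 : Tendsto (fun m : ℕ => ((n : ℝ) + 2) * u c a z (m + 1)) atTop
        (nhds (((n : ℝ) + 2) * g c a z)) :=
      ((hg c a z).comp (tendsto_add_atTop_nat 1)).const_mul ((n : ℝ) + 2)
    have h2 : (fun m : ℕ => u c a (Pca c a z) m) = fun m => ((n : ℝ) + 2) * u c a z (m + 1) := by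
      funext m
      show hca v c a ((Pca c a)^[m] (Pca c a z)) / ((n : ℝ) + 2) ^ m
          = ((n : ℝ) + 2) * (hca v c a ((Pca c a)^[m + 1] z) / ((n : ℝ) + 2) ^ (m + 1))
      rw [← Function.iterate_succ_apply, pow_succ]
      field_simp
    have h3 := h1
    rw [← h2] at h3
    exact tendsto_nhds_unique (hg c a (Pca c a z)) h3
  have hbdd : ∀ (c : Fin n → K) (a z : K),
      g c a z = 0 ↔ ∃ B : ℝ, ∀ m : ℕ, v ((Pca c a)^[m] z) ≤ B := by
    intro c a z
    constructor
    · intro hg0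
      refine ⟨Ctilde v c a, fun m => ?_⟩
      by_contra hgt
      push_neg at hgt
      have hform := iter_formula v hv c a hgt
      set t : ℝ := (v (((n + 2 : ℕ) : K))) ^ ((1 : ℝ) / ((n : ℝ) + 1)) with htdef
      have ht : 0 < t := tpos v
      set s : ℝ := v ((Pca c a)^[m] z) / t with hsdef
      have hs : 1 < s := (one_lt_div ht).2 (lt_of_le_of_lt (t_le_Ctilde v c a) hgt)
      have hs0 : 0 < s := lt_trans zero_lt_one hs
      have hdne : ((n : ℝ) + 2) ≠ 0 := ne_of_gt hd0
      have hsub : Tendsto (fun k : ℕ => u c a z (k + m)) atTop (nhds (g c a z)) :=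
        (hg c a z).comp (tendsto_add_atTop_nat m)
      have heq : ∀ k : ℕ, u c a z (k + m)
          = Real.log t * (r ^ m * r ^ k) + Real.log s / ((n : ℝ) + 2) ^ m := by
        intro k
        obtain ⟨hval, hbig⟩ := hform k
        have h1 : (Pca c a)^[k + m] z = (Pca c a)^[k] ((Pca c a)^[m] z) :=
          Function.iterate_add_apply _ k m z
        have hcastk : (((n + 2) ^ k : ℕ) : ℝ) = ((n : ℝ) + 2) ^ k := by push_cast; ring
        show Real.log (max (Ctilde v c a) (v ((Pca c a)^[k + m] z))) / ((n : ℝ) + 2) ^ (k + m)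
            = _
        rw [h1, max_eq_right hbig.le, hval,
          Real.log_mul (ne_of_gt ht) (pow_pos hs0 _).ne', Real.log_pow, hcastk, hrdef,
          pow_add]
        rw [one_div, inv_pow, inv_pow]
        field_simp
      have hlim2 : Tendsto (fun k : ℕ => Real.log t * (r ^ m * r ^ k)
          + Real.log s / ((n : ℝ) + 2) ^ m) atTop (nhds (Real.log s / ((n : ℝ) + 2) ^ m)) := by
        have h := (((tendsto_pow_atTop_nhds_zero_of_lt_one hr0.le hr1).const_mul
          (r ^ m)).const_mul (Real.log t)).add_const (Real.log s / ((n : ℝ) + 2) ^ m)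
        simpa using h
      have huniq : g c a z = Real.log s / ((n : ℝ) + 2) ^ m :=
        tendsto_nhds_unique ((funext heq : (fun k : ℕ => u c a z (k + m)) = _) ▸ hsub) hlim2
      have hpos : 0 < Real.log s / ((n : ℝ) + 2) ^ m :=
        div_pos (Real.log_pos hs) (pow_pos hd0 m)
      rw [hg0] at huniq
      linarith [huniq ▸ hpos]
    · rintro ⟨B, hB⟩
      have hD : 0 < Ctilde v c a := Ctilde_pos v c a
      set β : ℝ := max |Real.log (Ctilde v c a)| |Real.log (max (Ctilde v c a) B)| with hβdef
      have habs : ∀ m, |u c a z m| ≤ β * r ^ m := by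
        intro m
        have h1 : Real.log (Ctilde v c a) ≤ hca v c a ((Pca c a)^[m] z) :=
          Real.log_le_log hD (le_max_left _ _)
        have h2 : hca v c a ((Pca c a)^[m] z) ≤ Real.log (max (Ctilde v c a) B) :=
          Real.log_le_log (lt_of_lt_of_le hD (le_max_left _ _))
            (max_le_max le_rfl (hB m))
        have h3 : |hca v c a ((Pca c a)^[m] z)| ≤ β := by
          rw [abs_le]
          constructor
          · calc -β ≤ -|Real.log (Ctilde v c a)| := neg_le_neg (le_max_left _ _)
              _ ≤ Real.log (Ctilde v c a) := neg_abs_le _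
              _ ≤ _ := h1
          · exact le_trans h2 (le_trans (le_abs_self _) (le_max_right _ _))
        have e : β * r ^ m = β / ((n : ℝ) + 2) ^ m := by
          rw [hrdef, div_pow, one_pow, mul_one_div]
        rw [e]
        show |hca v c a ((Pca c a)^[m] z) / ((n : ℝ) + 2) ^ m| ≤ _
        rw [abs_div, abs_of_pos (pow_pos hd0 _)]
        gcongr
      have h0 : Tendsto (fun m : ℕ => β * r ^ m) atTop (nhds 0) := by
        have h := (tendsto_pow_atTop_nhds_zero_of_lt_one hr0.le hr1).const_mul β
        simpa using h
      exact tendsto_nhds_unique (hg c a z) (squeeze_zero_norm habs h0)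
  have hcont : ∀ (c : Fin n → K) (a z : K) (ε : ℝ), 0 < ε → ∃ δ : ℝ, 0 < δ ∧
      ∀ (c' : Fin n → K) (a' z' : K),
        (∀ i, v (c' i - c i) < δ) → v (a' - a) < δ → v (z' - z) < δ →
          |g c' a' z' - g c a z| < ε := by
    intro c a z ε hε
    letI : NormedField K := v.toNormedField
    have hnorm : ∀ x : K, v x = ‖x‖ := fun _ => rfl
    set C : ℝ := max (v a) (cnorm v c) + 1 with hCdef
    have hC : 0 < C := by
      have h1 : 0 ≤ max (v a) (cnorm v c) := le_trans (v.nonneg a) (le_max_left _ _)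
      rw [hCdef]
      linarith
    have hΦ : ∀ (m : ℕ) (p : K × (Fin n → K) × K),
        (fun q : K × (Fin n → K) × K => (Pca q.2.1 q.2.2 q.1, q.2))^[m] p
          = ((Pca p.2.1 p.2.2)^[m] p.1, p.2) := by
      intro m
      induction m with
      | zero => intro p; rfl
      | succ m ih =>
          intro p
          rw [Function.iterate_succ_apply, ih, ← Function.iterate_succ_apply]
    have hcontm : ∀ m : ℕ, Continuous fun p : K × (Fin n → K) × K =>
        hca v p.2.1 p.2.2 ((Pca p.2.1 p.2.2)^[m] p.1) / ((n : ℝ) + 2) ^ m := by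
      intro m
      have hΦc : Continuous fun q : K × (Fin n → K) × K => (Pca q.2.1 q.2.2 q.1, q.2) :=
        (cont_pca (continuous_fst.comp continuous_snd) (continuous_snd.comp continuous_snd)
          continuous_fst).prodMk continuous_snd
      have hiter : Continuous fun p : K × (Fin n → K) × K => (Pca p.2.1 p.2.2)^[m] p.1 := by
        have he : (fun p : K × (Fin n → K) × K => (Pca p.2.1 p.2.2)^[m] p.1)
            = fun p => ((fun q : K × (Fin n → K) × K =>
                (Pca q.2.1 q.2.2 q.1, q.2))^[m] p).1 := funext fun p => by rw [hΦ m p]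
        rw [he]
        exact continuous_fst.comp (hΦc.iterate m)
      have hq : Continuous fun p : K × (Fin n → K) × K =>
          max (Ctilde v p.2.1 p.2.2) (v ((Pca p.2.1 p.2.2)^[m] p.1)) :=
        (((cont_Ctilde v hnorm).comp continuous_snd)).max ((cont_v v hnorm).comp hiter)
      have hlog : Continuous fun p : K × (Fin n → K) × K =>
          hca v p.2.1 p.2.2 ((Pca p.2.1 p.2.2)^[m] p.1) := by
        show Continuous fun p : K × (Fin n → K) × K =>
          Real.log (max (Ctilde v p.2.1 p.2.2) (v ((Pca p.2.1 p.2.2)^[m] p.1)))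
        exact hq.log fun p => (lt_of_lt_of_le (Ctilde_pos v _ _) (le_max_left _ _)).ne'
      exact hlog.div_const _
    have hCO : ContinuousOn (fun p : K × (Fin n → K) × K => g p.2.1 p.2.2 p.1)
        {p : K × (Fin n → K) × K | max (v p.2.2) (cnorm v p.2.1) ≤ C} :=
      (hunif C hC).continuousOn (Filter.Eventually.of_forall fun m => (hcontm m).continuousOn).frequently
    have hmem : {p : K × (Fin n → K) × K | max (v p.2.2) (cnorm v p.2.1) ≤ C}
        ∈ nhds ((z, c, a) : K × (Fin n → K) × K) := by
      have hopen : IsOpen {p : K × (Fin n → K) × K | max (v p.2.2) (cnorm v p.2.1) < C} :=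
        isOpen_lt (((cont_v v hnorm).comp (continuous_snd.comp continuous_snd)).max
          ((cont_cnorm v hnorm).comp (continuous_fst.comp continuous_snd))) continuous_const
      refine Filter.mem_of_superset (hopen.mem_nhds ?_) (Set.setOf_subset_setOf.2 fun p hp => le_of_lt hp)
      show max (v a) (cnorm v c) < C
      rw [hCdef]
      linarith
    have hCA : ContinuousAt (fun p : K × (Fin n → K) × K => g p.2.1 p.2.2 p.1) (z, c, a) :=
      hCO.continuousAt hmem
    rw [Metric.continuousAt_iff] at hCA
    obtain ⟨δ, hδ, hball⟩ := hCA ε hε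
    refine ⟨δ, hδ, ?_⟩
    intro c' a' z' hc' ha' hz'
    have hdistp : dist ((z', c', a') : K × (Fin n → K) × K) ((z, c, a) : K × (Fin n → K) × K)
        < δ := by
      rw [Prod.dist_eq]
      apply max_lt
      · rw [dist_eq_norm]
        exact hz'
      · rw [Prod.dist_eq]
        apply max_lt
        · exact (dist_pi_lt_iff hδ).2 fun i => by rw [dist_eq_norm]; exact hc' i
        · rw [dist_eq_norm]
          exact ha'
    have hres := hball hdistp
    rw [Real.dist_eq] at hres
    exact hres
  exact ⟨g, fun c a z => hg c a z, hunif, hnonneg, hcont, hfun, hbdd⟩
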